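/- Let T ∈ [0,1), k ∈ ℝ, let μ : (T,1] → ℝ be C¹, and let p : (T,1] → ℝ satisfy p(t) ≥ 0 and e^{−2μ(t)}(2tμ̇(t) − 1) − k = 8πt²p(t) for all t ∈ (T,1] (with p continuous). Then for all t ∈ (T,1]: e^{−2μ(t)} ≥ (e^{−2μ(1)} + k)/t − k. In particular, if k ≥ 0 then e^{−2μ(t)} ≥ e^{−2μ(1)}, and if k = −1 and μ(1) ≤ 0 then e^{−2μ(t)} ≥ 1; in either case μ is bounded above on (T,1]. -/

import Mathlib

open Real Set

/-- the one-dimensional consequence of the field equation (E2)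
together with `p ≥ 0`: `e^{−2μ(t)} ≥ (e^{−2μ(1)} + k)/t − k`; in particular `μ` is
bounded above if `k ≥ 0`, or if `k = −1` and `μ(1) ≤ 0`. -/
theorem stmt15 (T k : ℝ) (hT : T ∈ Ico (0 : ℝ) 1) (mu mu' p : ℝ → ℝ)
    (hmu : ∀ t ∈ Ioc T 1, HasDerivWithinAt mu (mu' t) (Ioc T 1) t)
    (hmu'c : ContinuousOn mu' (Ioc T 1))
    (hpc : ContinuousOn p (Ioc T 1))
    (hp : ∀ t ∈ Ioc T 1, 0 ≤ p t)
    (heq : ∀ t ∈ Ioc T 1,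
      Real.exp (-(2 * mu t)) * (2 * t * mu' t - 1) - k = 8 * π * t ^ 2 * p t) :
    (∀ t ∈ Ioc T 1, (Real.exp (-(2 * mu 1)) + k) / t - k ≤ Real.exp (-(2 * mu t))) ∧
    (0 ≤ k → ∀ t ∈ Ioc T 1, Real.exp (-(2 * mu 1)) ≤ Real.exp (-(2 * mu t))) ∧
    (k = -1 → mu 1 ≤ 0 → ∀ t ∈ Ioc T 1, 1 ≤ Real.exp (-(2 * mu t))) ∧
    ((0 ≤ k ∨ (k = -1 ∧ mu 1 ≤ 0)) → ∃ M : ℝ, ∀ t ∈ Ioc T 1, mu t ≤ M) := by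
  have hT0 : 0 ≤ T := hT.1
  have h1mem : (1 : ℝ) ∈ Ioc T 1 := ⟨hT.2, le_refl 1⟩
  set f : ℝ → ℝ := fun t => t * Real.exp (-(2 * mu t)) + k * t with hf
  have hmuc : ContinuousOn mu (Ioc T 1) := fun t ht => (hmu t ht).continuousWithinAt
  have hcont : ContinuousOn f (Ioc T 1) := by
    apply ContinuousOn.add
    · exact continuousOn_id.mul ((hmuc.const_smul (2:ℝ)).neg.rexp)
    · exact continuousOn_const.mul continuousOn_id
  have hderiv : ∀ x ∈ Ioo T 1, HasDerivAt f
      (Real.exp (-(2 * mu x)) + x * (Real.exp (-(2 * mu x)) * (-(2 * mu' x))) + k) x := by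
    intro x hx
    have hxm : x ∈ Ioc T 1 := ⟨hx.1, le_of_lt hx.2⟩
    have hnb : Ioc T 1 ∈ nhds x := Ioc_mem_nhds hx.1 hx.2
    have hmu' : HasDerivAt mu (mu' x) x := (hmu x hxm).hasDerivAt hnb
    have hexp : HasDerivAt (fun t => Real.exp (-(2 * mu t)))
        (Real.exp (-(2 * mu x)) * (-(2 * mu' x))) x :=
      ((hmu'.const_mul 2).neg).exp
    have := (hasDerivAt_id x).mul hexp
    have hk : HasDerivAt (fun t => k * t) k x := by
      simpa using (hasDerivAt_id x).const_mul k
    exact (this.add hk).congr_deriv (by rw [id_eq, one_mul])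
  have hanti : AntitoneOn f (Ioc T 1) := by
    apply antitoneOn_of_deriv_nonpos (convex_Ioc T 1) hcont
    · intro x hx
      rw [interior_Ioc] at hx
      exact (hderiv x hx).differentiableAt.differentiableWithinAt
    · intro x hx
      rw [interior_Ioc] at hx
      have hxm : x ∈ Ioc T 1 := ⟨hx.1, le_of_lt hx.2⟩
      rw [(hderiv x hx).deriv]
      have he := heq x hxm
      have hpx := hp x hxm
      have hpi : (0:ℝ) ≤ 8 * π * x ^ 2 := by positivity
      nlinarith [mul_nonneg hpi hpx]
  have main : ∀ t ∈ Ioc T 1, (Real.exp (-(2 * mu 1)) + k) / t - k ≤ Real.exp (-(2 * mu t)) := by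
    intro t ht
    have ht0 : 0 < t := lt_of_le_of_lt hT0 ht.1
    have hle : f 1 ≤ f t := hanti ht h1mem ht.2
    simp only [hf, one_mul, mul_one] at hle
    rw [div_sub' (ne_of_gt ht0), div_le_iff₀ ht0]
    nlinarith
  have hk0 : 0 ≤ k → ∀ t ∈ Ioc T 1, Real.exp (-(2 * mu 1)) ≤ Real.exp (-(2 * mu t)) := by
    intro hk t ht
    have ht0 : 0 < t := lt_of_le_of_lt hT0 ht.1
    have hA : 0 < Real.exp (-(2 * mu 1)) := Real.exp_pos _
    have h1 := main t ht
    have h2 : Real.exp (-(2 * mu 1)) + k ≤ (Real.exp (-(2 * mu 1)) + k) / t := by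
      rw [le_div_iff₀ ht0]
      nlinarith [mul_nonneg (add_nonneg hA.le hk) (sub_nonneg.mpr ht.2)]
    linarith
  have hkm1 : k = -1 → mu 1 ≤ 0 → ∀ t ∈ Ioc T 1, 1 ≤ Real.exp (-(2 * mu t)) := by
    intro hk hmu1 t ht
    have ht0 : 0 < t := lt_of_le_of_lt hT0 ht.1
    have hA : 1 ≤ Real.exp (-(2 * mu 1)) := by
      rw [Real.one_le_exp_iff]; linarith
    have h1 := main t ht
    rw [hk] at h1
    have h2 : 0 ≤ (Real.exp (-(2 * mu 1)) + -1) / t := by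
      apply div_nonneg _ (le_of_lt ht0); linarith
    linarith
  refine ⟨main, hk0, hkm1, ?_⟩
  rintro (hk | ⟨hk, hmu1⟩)
  · refine ⟨mu 1, fun t ht => ?_⟩
    have := hk0 hk t ht
    rw [Real.exp_le_exp] at this
    linarith
  · refine ⟨0, fun t ht => ?_⟩
    have := hkm1 hk hmu1 t ht
    rw [show (1:ℝ) = Real.exp 0 by simp, Real.exp_le_exp] at this
    linarith
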